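/- Let S be a nonempty set and 𝒮 a δ-ring on S with an increasing sequence Sₙ ∈ 𝒮 covering S. For each A ∈ 𝒮 let F_A = (F_A⁺, F_A⁻) be a quasi-Lévy type measure, and suppose that for each Borel set B ⊆ ℝ bounded away from 0 the map A ↦ F_A(B) = F_A⁺(B) − F_A⁻(B) is a real-valued signed measure on 𝒮. Set J(A,B) = ∫_B (1 ∧ x²) F_A(dx), and assume (★): for every A ∈ 𝒮, sup ∑_{i∈I} |J(A_i,B_i)| < ∞, the supremum over all finite families of pairwise disjoint rectangles A_i × B_i with A_i ∈ 𝒮, A_i ⊆ A, B_i ∈ ℬ(ℝ). Then for every sequence {Aₙ} ⊆ 𝒮 with Aₙ decreasing and ⋂ₙ Aₙ = ∅, one has ∫_ℝ (1 ∧ x²) |F_{Aₙ}|(dx) → 0 as n → ∞, where |F_A| = F_A⁺ + F_A⁻. -/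

import Mathlib

open MeasureTheory Set Filter Topology
open scoped ENNReal NNReal

/-- A δ-ring of subsets: nonempty, closed under finite unions, set differences,
and countable intersections. -/
structure IsDeltaRing {T : Type*} (𝒜 : Set (Set T)) : Prop where
  nonempty : 𝒜.Nonempty
  union_mem : ∀ ⦃A B : Set T⦄, A ∈ 𝒜 → B ∈ 𝒜 → A ∪ B ∈ 𝒜
  diff_mem : ∀ ⦃A B : Set T⦄, A ∈ 𝒜 → B ∈ 𝒜 → A \ B ∈ 𝒜
  iInter_mem : ∀ A : ℕ → Set T, (∀ n, A n ∈ 𝒜) → (⋂ n, A n) ∈ 𝒜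

/-- A real-valued signed measure on a δ-ring `𝒜`: it vanishes on `∅` and is σ-additive
(with unconditionally convergent series, captured by `HasSum`) on every sequence of
pairwise disjoint members of `𝒜` whose union lies in `𝒜`. -/
def IsSignedMeasureOn {T : Type*} (𝒜 : Set (Set T)) (μ : Set T → ℝ) : Prop :=
  μ ∅ = 0 ∧ ∀ A : ℕ → Set T, (∀ n, A n ∈ 𝒜) → Pairwise (Function.onFun Disjoint A) →
    (⋃ n, A n) ∈ 𝒜 → HasSum (fun n => μ (A n)) (μ (⋃ n, A n))

/-- A finite (real-valued, countably additive) signed measure on the σ-algebra of a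
measurable space. -/
def IsFiniteSignedMeasure {X : Type*} [MeasurableSpace X] (μ : Set X → ℝ) : Prop :=
  μ ∅ = 0 ∧ ∀ B : ℕ → Set X, (∀ n, MeasurableSet (B n)) →
    Pairwise (Function.onFun Disjoint B) → HasSum (fun n => μ (B n)) (μ (⋃ n, B n))

/-- The set of sums `∑ i, |Q₀ (Aᵢ) (Bᵢ)|` over all finite families of pairwise disjoint
rectangles `Aᵢ × Bᵢ` with `Aᵢ ∈ 𝒜`, `Aᵢ ⊆ A`, `Bᵢ` measurable. -/
def RectSums {T X : Type*} [MeasurableSpace X] (𝒜 : Set (Set T))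
    (Q₀ : Set T → Set X → ℝ) (A : Set T) : Set ℝ :=
  { r | ∃ (n : ℕ) (As : Fin n → Set T) (Bs : Fin n → Set X),
      (∀ i, As i ∈ 𝒜 ∧ As i ⊆ A ∧ MeasurableSet (Bs i)) ∧
      (Pairwise fun i j => Disjoint (As i ×ˢ Bs i) (As j ×ˢ Bs j)) ∧
      r = ∑ i, |Q₀ (As i) (Bs i)| }

/-- A Borel set is bounded away from zero if it is disjoint from some interval
`(-r, r)`, `r > 0`. -/
def BoundedAwayFromZero (B : Set ℝ) : Prop := ∃ r > 0, ∀ x ∈ B, r ≤ |x|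

/-- A quasi-Lévy type measure, presented as its Jordan pair `(ν⁺, ν⁻)`: two mutually
singular Borel measures on `ℝ` with no mass at `0`, finite on every Borel set bounded
away from `0`, and with `∫ (1 ∧ x²) d(ν⁺ + ν⁻) < ∞`. -/
def IsQuasiLevyPair (νp νm : Measure ℝ) : Prop :=
  νp {0} = 0 ∧ νm {0} = 0 ∧ νp.MutuallySingular νm ∧
  (∀ r : ℝ, 0 < r → νp {x | r ≤ |x|} < ⊤ ∧ νm {x | r ≤ |x|} < ⊤) ∧
  ∫⁻ x, ENNReal.ofReal (min 1 (x ^ 2)) ∂(νp + νm) < ⊤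

/-- `J(A, B) = ∫_B (1 ∧ x²) F_A(dx)` for the quasi-Lévy family `F_A = F_A⁺ - F_A⁻`. -/
noncomputable def Jfun {S : Type*} (Fp Fm : Set S → Measure ℝ) (A : Set S) (B : Set ℝ) : ℝ :=
  (∫⁻ x in B, ENNReal.ofReal (min 1 (x ^ 2)) ∂(Fp A)).toReal -
  (∫⁻ x in B, ENNReal.ofReal (min 1 (x ^ 2)) ∂(Fm A)).toReal


namespace QLAux
noncomputable def g : ℝ → ℝ≥0∞ := fun x => ENNReal.ofReal (min 1 (x ^ 2))

lemma g_meas : Measurable g := (continuous_const.min (continuous_pow 2)).measurable.ennreal_ofReal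

lemma g_zero : g 0 = 0 := by simp [g]

noncomputable def II {S : Type*} (F : Set S → Measure ℝ) (A' : Set S) (B : Set ℝ) : ℝ≥0∞ :=
  ∫⁻ x in B, g x ∂(F A')

lemma II_univ {S : Type*} (F : Set S → Measure ℝ) (A' : Set S) :
    II F A' univ = ∫⁻ x, g x ∂(F A') := by rw [II, Measure.restrict_univ]

lemma II_mono {S : Type*} (F : Set S → Measure ℝ) (A' : Set S) {B B' : Set ℝ} (h : B ⊆ B') :
    II F A' B ≤ II F A' B' := lintegral_mono_set h

lemma II_null {S : Type*} (F : Set S → Measure ℝ) (A' : Set S) {B : Set ℝ} (h : F A' B = 0) :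
    II F A' B = 0 := by
  rw [II, Measure.restrict_eq_zero.mpr h, lintegral_zero_measure]

lemma II_split {S : Type*} (F : Set S → Measure ℝ) (A' : Set S) {E : Set ℝ}
    (hE : MeasurableSet E) : II F A' univ = II F A' E + II F A' Eᶜ := by
  rw [II_univ]; exact (lintegral_add_compl g hE).symm

lemma II_ge {S : Type*} (F : Set S → Measure ℝ) (A' : Set S) {B : Set ℝ} {r : ℝ}
    (hr : 0 ≤ r) (hB : ∀ x ∈ B, r ≤ |x|) :
    ENNReal.ofReal (min 1 (r ^ 2)) * F A' B ≤ II F A' B := by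
  rw [II, ← setLIntegral_const]
  refine setLIntegral_mono g_meas fun x hx => ?_
  exact ENNReal.ofReal_le_ofReal (min_le_min le_rfl (by nlinarith [hB x hx, abs_nonneg x, sq_abs x]))

lemma II_le_iSup {S : Type*} (F : Set S → Measure ℝ) (A' : Set S) {B : Set ℝ}
    (hB : MeasurableSet B) :
    II F A' B ≤ ⨆ j : ℕ, II F A' (B ∩ {x : ℝ | 1 / ((j : ℝ) + 1) ≤ |x|}) := by
  set V : ℕ → Set ℝ := fun j => {x : ℝ | 1 / ((j : ℝ) + 1) ≤ |x|} with hV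
  have hVmeas : ∀ j, MeasurableSet (V j) :=
    fun j => measurableSet_le measurable_const continuous_abs.measurable
  have hVmono : Monotone V := by
    intro i j hij x hx
    simp only [hV, mem_setOf_eq] at hx ⊢
    refine le_trans ?_ hx
    have h1 : (0:ℝ) < (i:ℝ) + 1 := by positivity
    have h2 : (i:ℝ) + 1 ≤ (j:ℝ) + 1 := by exact_mod_cast Nat.succ_le_succ hij
    exact one_div_le_one_div_of_le h1 h2
  have key : ∀ x, B.indicator g x ≤ ⨆ j, (B ∩ V j).indicator g x := by
    intro x
    by_cases hxB : x ∈ B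
    · by_cases hx0 : x = 0
      · have h1 : B.indicator g x = 0 := by
          subst hx0; rw [indicator_of_mem hxB, g_zero]
        rw [h1]; exact zero_le
      · obtain ⟨j, hj⟩ := exists_nat_one_div_lt (abs_pos.mpr hx0)
        have hxV : x ∈ V j := le_of_lt hj
        calc B.indicator g x = g x := indicator_of_mem hxB g
          _ = (B ∩ V j).indicator g x := (indicator_of_mem (mem_inter hxB hxV) g).symm
          _ ≤ ⨆ j, (B ∩ V j).indicator g x := le_iSup (fun j => (B ∩ V j).indicator g x) j
    · rw [indicator_of_notMem hxB]; exact zero_le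
  calc II F A' B = ∫⁻ x, B.indicator g x ∂(F A') := (lintegral_indicator hB g).symm
    _ ≤ ∫⁻ x, ⨆ j, (B ∩ V j).indicator g x ∂(F A') := lintegral_mono key
    _ = ⨆ j, ∫⁻ x, (B ∩ V j).indicator g x ∂(F A') := by
        refine lintegral_iSup (fun j => g_meas.indicator (hB.inter (hVmeas j))) ?_
        intro i j hij
        exact indicator_le_indicator_of_subset (inter_subset_inter_right B (hVmono hij))
          (fun _ => zero_le)
    _ = ⨆ j, II F A' (B ∩ V j) := by
        exact iSup_congr fun j => lintegral_indicator (hB.inter (hVmeas j)) g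

end QLAux

section MainProof
open QLAux

lemma Jfun_eq' {S : Type*} (Fp Fm : Set S → Measure ℝ) (A' : Set S) (B : Set ℝ) :
    Jfun Fp Fm A' B = (II Fp A' B).toReal - (II Fm A' B).toReal := rfl

/-- Under condition (★) — finiteness, for every `A ∈ 𝒮`, of the supremum
of `∑ᵢ |J(Aᵢ,Bᵢ)|` over finite disjoint rectangle families inside `A × ℝ`, where
`J(A,B) = ∫_B (1 ∧ x²) F_A(dx)` — for every decreasing sequence `Aₙ` in the δ-ring `𝒮`
with empty intersection, `∫_ℝ (1 ∧ x²) |F_{Aₙ}|(dx) → 0`, where `|F_A| = F_A⁺ + F_A⁻`. -/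
theorem tendsto_levy_mass_of_antitone {S : Type*} [Nonempty S]
    (𝒮 : Set (Set S)) (h𝒮 : IsDeltaRing 𝒮)
    (Sseq : ℕ → Set S) (hSmem : ∀ n, Sseq n ∈ 𝒮) (hSmono : Monotone Sseq)
    (hScover : ⋃ n, Sseq n = univ)
    (Fp Fm : Set S → Measure ℝ)
    (hql : ∀ A ∈ 𝒮, IsQuasiLevyPair (Fp A) (Fm A))
    (hsigned : ∀ B : Set ℝ, MeasurableSet B → BoundedAwayFromZero B →
      IsSignedMeasureOn 𝒮 fun A => (Fp A B).toReal - (Fm A B).toReal)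
    (hstar : ∀ A ∈ 𝒮, BddAbove (RectSums 𝒮 (Jfun Fp Fm) A))
    (A : ℕ → Set S) (hA : ∀ n, A n ∈ 𝒮) (hanti : Antitone A)
    (hempty : ⋂ n, A n = ∅) :
    Tendsto (fun n => ∫⁻ x, ENNReal.ofReal (min 1 (x ^ 2)) ∂(Fp (A n) + Fm (A n)))
      atTop (nhds 0) := by
  classical
  obtain ⟨C, hC⟩ := hstar (A 0) (hA 0)
  -- total mass
  set mT : Set S → ℝ≥0∞ := fun A' => II Fp A' univ + II Fm A' univ with hmT
  have hmfin : ∀ A' ∈ 𝒮, mT A' ≠ ⊤ := by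
    intro A' h
    have h5 := (hql A' h).2.2.2.2
    rw [lintegral_add_measure] at h5
    have heq : mT A' = ∫⁻ x, g x ∂(Fp A') + ∫⁻ x, g x ∂(Fm A') := by
      rw [hmT]; simp only [II_univ]
    rw [heq]
    exact h5.ne
  -- the disjointification
  set D : ℕ → Set S := fun k => A k \ A (k + 1) with hD
  have hDmem : ∀ k, D k ∈ 𝒮 := fun k => h𝒮.diff_mem (hA k) (hA (k + 1))
  have hDsub : ∀ k, D k ⊆ A k := fun k => diff_subset
  have hDlt : ∀ i j : ℕ, i < j → Disjoint (D i) (D j) := by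
    intro i j hij
    refine disjoint_left.mpr fun x hxi hxj => ?_
    exact hxi.2 (hanti (by omega : i + 1 ≤ j) hxj.1)
  have hDdisj : ∀ i j : ℕ, i ≠ j → Disjoint (D i) (D j) := by
    intro i j hij
    rcases lt_or_gt_of_ne hij with h | h
    · exact hDlt i j h
    · exact (hDlt j i h).symm
  have hDUnion : ∀ n, (⋃ k, D (n + k)) = A n := by
    intro n
    ext x
    constructor
    · rintro hx
      obtain ⟨k, hk⟩ := mem_iUnion.mp hx
      exact hanti (Nat.le_add_right n k) hk.1
    · intro hx
      have hex : ∃ m, x ∉ A m := by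
        by_contra h
        push_neg at h
        have hmem : x ∈ ⋂ n, A n := mem_iInter.mpr h
        rw [hempty] at hmem
        exact hmem
      have hspec : x ∉ A (Nat.find hex) := Nat.find_spec hex
      have hlt : ∀ l, l < Nat.find hex → x ∈ A l := fun l hl => not_not.mp (Nat.find_min hex hl)
      have hnlt : n < Nat.find hex := by
        by_contra h
        push_neg at h
        exact hspec (hanti h hx)
      refine mem_iUnion.mpr ⟨Nat.find hex - n - 1, ?_, ?_⟩
      · exact hlt _ (by omega)
      · have : n + (Nat.find hex - n - 1) + 1 = Nat.find hex := by omega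
        rw [this]
        exact hspec
  -- Hahn sets for the D k
  have hEk : ∀ k, ∃ E : Set ℝ, MeasurableSet E ∧ Fp (D k) E = 0 ∧ Fm (D k) Eᶜ = 0 :=
    fun k => (hql (D k) (hDmem k)).2.2.1
  choose E hEmeas hEp hEm using hEk
  have hIfin : ∀ A' ∈ 𝒮, II Fp A' univ ≠ ⊤ :=
    fun A' h => ne_top_of_le_ne_top (hmfin A' h) le_self_add
  have hKfin : ∀ A' ∈ 𝒮, II Fm A' univ ≠ ⊤ :=
    fun A' h => ne_top_of_le_ne_top (hmfin A' h) le_add_self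
  have hrepk : ∀ k, (mT (D k)).toReal
      = |Jfun Fp Fm (D k) ((E k)ᶜ)| + |Jfun Fp Fm (D k) (E k)| := by
    intro k
    have hIe : II Fp (D k) (E k) = 0 := II_null Fp (D k) (hEp k)
    have hKe : II Fm (D k) ((E k)ᶜ) = 0 := II_null Fm (D k) (hEm k)
    have hIu : II Fp (D k) univ = II Fp (D k) ((E k)ᶜ) := by
      rw [II_split Fp (D k) (hEmeas k), hIe, zero_add]
    have hKu : II Fm (D k) univ = II Fm (D k) (E k) := by
      rw [II_split Fm (D k) (hEmeas k), hKe, add_zero]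
    have hfi := hIfin (D k) (hDmem k)
    have hfk := hKfin (D k) (hDmem k)
    rw [Jfun_eq', Jfun_eq', hKe, ← hIu, ← hKu]
    have hIe' : II Fp (D k) (E k) = 0 := hIe
    rw [hIe']
    simp only [hmT, ENNReal.toReal_add hfi hfk, ENNReal.toReal_zero, sub_zero, zero_sub,
      abs_neg, abs_of_nonneg ENNReal.toReal_nonneg]
  -- ★ : partial sums of total masses lie in RectSums
  have hmem : ∀ N : ℕ,
      (∑ k ∈ Finset.range N, (mT (D k)).toReal) ∈ RectSums 𝒮 (Jfun Fp Fm) (A 0) := by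
    intro N
    refine ⟨N + N,
      fun i => Sum.elim (fun k : Fin N => D (k : ℕ)) (fun k : Fin N => D (k : ℕ))
        (finSumFinEquiv.symm i),
      fun i => Sum.elim (fun k : Fin N => (E (k : ℕ))ᶜ) (fun k : Fin N => E (k : ℕ))
        (finSumFinEquiv.symm i), ?_, ?_, ?_⟩
    · intro i
      rcases hi : finSumFinEquiv.symm i with k | k
      · simp only [hi, Sum.elim_inl]
        exact ⟨hDmem _, (hDsub _).trans (hanti (Nat.zero_le _)), (hEmeas _).compl⟩
      · simp only [hi, Sum.elim_inr]
        exact ⟨hDmem _, (hDsub _).trans (hanti (Nat.zero_le _)), hEmeas _⟩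
    · intro i j hij
      have hsym : finSumFinEquiv.symm i ≠ finSumFinEquiv.symm j :=
        fun h => hij (finSumFinEquiv.symm.injective h)
      rcases hi : finSumFinEquiv.symm i with k | k <;> rcases hj : finSumFinEquiv.symm j with l | l <;>
        rw [hi, hj] at hsym <;> simp only [hi, hj, Sum.elim_inl, Sum.elim_inr]
      · have hkl : (k : ℕ) ≠ (l : ℕ) := Fin.val_ne_of_ne fun h => hsym (by rw [h])
        exact Set.Disjoint.set_prod_left (hDdisj _ _ hkl) _ _
      · by_cases hkl : (k : ℕ) = (l : ℕ)
        · rw [hkl]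
          exact Set.Disjoint.set_prod_right disjoint_compl_left _ _
        · exact Set.Disjoint.set_prod_left (hDdisj _ _ hkl) _ _
      · by_cases hkl : (k : ℕ) = (l : ℕ)
        · rw [hkl]
          exact Set.Disjoint.set_prod_right disjoint_compl_right _ _
        · exact Set.Disjoint.set_prod_left (hDdisj _ _ hkl) _ _
      · have hkl : (k : ℕ) ≠ (l : ℕ) := Fin.val_ne_of_ne fun h => hsym (by rw [h])
        exact Set.Disjoint.set_prod_left (hDdisj _ _ hkl) _ _
    · calc ∑ k ∈ Finset.range N, (mT (D k)).toReal
          = ∑ k : Fin N, (mT (D (k : ℕ))).toReal := (Fin.sum_univ_eq_sum_range _ N).symm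
        _ = ∑ k : Fin N, (|Jfun Fp Fm (D (k:ℕ)) ((E (k:ℕ))ᶜ)| + |Jfun Fp Fm (D (k:ℕ)) (E (k:ℕ))|) := by
            exact Finset.sum_congr rfl fun k _ => hrepk (k : ℕ)
        _ = ∑ k : Fin N, |Jfun Fp Fm (D (k:ℕ)) ((E (k:ℕ))ᶜ)|
              + ∑ k : Fin N, |Jfun Fp Fm (D (k:ℕ)) (E (k:ℕ))| := Finset.sum_add_distrib
        _ = ∑ s : Fin N ⊕ Fin N,
              |Jfun Fp Fm (Sum.elim (fun k : Fin N => D (k:ℕ)) (fun k : Fin N => D (k:ℕ)) s)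
                (Sum.elim (fun k : Fin N => (E (k:ℕ))ᶜ) (fun k : Fin N => E (k:ℕ)) s)| := by
            simp only [Fintype.sum_sum_type, Sum.elim_inl, Sum.elim_inr]
        _ = ∑ i : Fin (N + N),
              |Jfun Fp Fm (Sum.elim (fun k : Fin N => D (k:ℕ)) (fun k : Fin N => D (k:ℕ))
                  (finSumFinEquiv.symm i))
                (Sum.elim (fun k : Fin N => (E (k:ℕ))ᶜ) (fun k : Fin N => E (k:ℕ))
                  (finSumFinEquiv.symm i))| := (Equiv.sum_comp finSumFinEquiv.symm _).symm
  have hCb : ∀ N, ∑ k ∈ Finset.range N, (mT (D k)).toReal ≤ C := fun N => hC (hmem N)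
  have hsummable : Summable fun k => (mT (D k)).toReal :=
    summable_of_sum_range_le (fun k => ENNReal.toReal_nonneg) hCb
  have htsum_ne : (∑' k, mT (D k)) ≠ ⊤ := by
    have heq : (∑' k, mT (D k)) = ENNReal.ofReal (∑' k, (mT (D k)).toReal) := by
      rw [ENNReal.ofReal_tsum_of_nonneg (fun k => ENNReal.toReal_nonneg) hsummable]
      exact tsum_congr fun k => (ENNReal.ofReal_toReal (hmfin _ (hDmem k))).symm
    rw [heq]
    exact ENNReal.ofReal_ne_top
  have htailm : ∀ n, (∑' k, mT (D (n + k))) ≠ ⊤ := fun n =>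
    ne_top_of_le_ne_top htsum_ne
      (ENNReal.tsum_comp_le_tsum_of_injective (fun a b h => by omega) fun k => mT (D k))
  -- countable additivity (scalar form) on sets bounded away from zero
  have hscalar : ∀ n : ℕ, ∀ r : ℝ, 0 < r → ∀ B : Set ℝ, MeasurableSet B → (∀ x ∈ B, r ≤ |x|) →
      Fp (A n) B + ∑' k, Fm (D (n + k)) B = Fm (A n) B + ∑' k, Fp (D (n + k)) B := by
    intro n r hr B hB hrB
    have hBsub : B ⊆ {x : ℝ | r ≤ |x|} := fun x hx => hrB x hx
    have hPfin : ∀ A' ∈ 𝒮, Fp A' B ≠ ⊤ := fun A' h =>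
      (lt_of_le_of_lt (measure_mono hBsub) ((hql A' h).2.2.2.1 r hr).1).ne
    have hMfin : ∀ A' ∈ 𝒮, Fm A' B ≠ ⊤ := fun A' h =>
      (lt_of_le_of_lt (measure_mono hBsub) ((hql A' h).2.2.2.1 r hr).2).ne
    set c : ℝ≥0∞ := ENNReal.ofReal (min 1 (r ^ 2)) with hc
    have hc0 : c ≠ 0 := by
      rw [hc]
      simp only [ne_eq, ENNReal.ofReal_eq_zero, not_le]
      exact lt_min one_pos (by positivity)
    have hboundP : ∀ j, c * Fp (D j) B ≤ mT (D j) := fun j =>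
      le_trans (II_ge Fp (D j) hr.le hrB) (le_trans (II_mono Fp (D j) (subset_univ B)) le_self_add)
    have hboundM : ∀ j, c * Fm (D j) B ≤ mT (D j) := fun j =>
      le_trans (II_ge Fm (D j) hr.le hrB) (le_trans (II_mono Fm (D j) (subset_univ B)) le_add_self)
    have hsumP : (∑' k, Fp (D (n + k)) B) ≠ ⊤ := by
      intro htop
      have h1 : c * ∑' k, Fp (D (n + k)) B ≤ ∑' k, mT (D (n + k)) := by
        rw [← ENNReal.tsum_mul_left]
        exact ENNReal.tsum_le_tsum fun k => hboundP _
      rw [htop, ENNReal.mul_top hc0] at h1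
      exact htailm n (top_le_iff.mp h1)
    have hsumM : (∑' k, Fm (D (n + k)) B) ≠ ⊤ := by
      intro htop
      have h1 : c * ∑' k, Fm (D (n + k)) B ≤ ∑' k, mT (D (n + k)) := by
        rw [← ENNReal.tsum_mul_left]
        exact ENNReal.tsum_le_tsum fun k => hboundM _
      rw [htop, ENNReal.mul_top hc0] at h1
      exact htailm n (top_le_iff.mp h1)
    have hsP : Summable fun k => (Fp (D (n + k)) B).toReal := ENNReal.summable_toReal hsumP
    have hsM : Summable fun k => (Fm (D (n + k)) B).toReal := ENNReal.summable_toReal hsumM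
    have hSM := (hsigned B hB ⟨r, hr, hrB⟩).2 (fun k => D (n + k)) (fun k => hDmem _)
      (fun i j hij => hDdisj _ _ (by omega)) (by rw [hDUnion n]; exact hA n)
    rw [hDUnion n] at hSM
    have h2 : HasSum (fun k => (Fp (D (n + k)) B).toReal - (Fm (D (n + k)) B).toReal)
        ((∑' k, (Fp (D (n + k)) B).toReal) - ∑' k, (Fm (D (n + k)) B).toReal) :=
      hsP.hasSum.sub hsM.hasSum
    have h3 : (Fp (A n) B).toReal - (Fm (A n) B).toReal
        = (∑' k, (Fp (D (n + k)) B).toReal) - ∑' k, (Fm (D (n + k)) B).toReal := hSM.unique h2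
    refine (ENNReal.toReal_eq_toReal_iff' (ENNReal.add_ne_top.mpr ⟨hPfin _ (hA n), hsumM⟩)
      (ENNReal.add_ne_top.mpr ⟨hMfin _ (hA n), hsumP⟩)).mp ?_
    rw [ENNReal.toReal_add (hPfin _ (hA n)) hsumM, ENNReal.toReal_add (hMfin _ (hA n)) hsumP,
      ENNReal.tsum_toReal_eq (fun k => hMfin _ (hDmem _)),
      ENNReal.tsum_toReal_eq (fun k => hPfin _ (hDmem _))]
    linarith [h3]
  -- countable additivity of the weighted integrals
  have hstar2 : ∀ n : ℕ, ∀ r : ℝ, 0 < r → ∀ B : Set ℝ, MeasurableSet B → (∀ x ∈ B, r ≤ |x|) →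
      II Fp (A n) B + ∑' k, II Fm (D (n + k)) B
        = II Fm (A n) B + ∑' k, II Fp (D (n + k)) B := by
    intro n r hr B hB hrB
    have hmeq : (Fp (A n)).restrict B + Measure.sum (fun k => (Fm (D (n + k))).restrict B)
        = (Fm (A n)).restrict B + Measure.sum (fun k => (Fp (D (n + k))).restrict B) := by
      ext t ht
      rw [Measure.add_apply, Measure.add_apply, Measure.sum_apply _ ht, Measure.sum_apply _ ht]
      simp only [Measure.restrict_apply ht]
      exact hscalar n r hr (t ∩ B) (ht.inter hB) fun x hx => hrB x hx.2
    calc II Fp (A n) B + ∑' k, II Fm (D (n + k)) B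
        = ∫⁻ x, g x ∂((Fp (A n)).restrict B + Measure.sum fun k => (Fm (D (n + k))).restrict B) := by
          rw [lintegral_add_measure, lintegral_sum_measure]
          rfl
      _ = ∫⁻ x, g x ∂((Fm (A n)).restrict B + Measure.sum fun k => (Fp (D (n + k))).restrict B) := by
          rw [hmeq]
      _ = II Fm (A n) B + ∑' k, II Fp (D (n + k)) B := by
          rw [lintegral_add_measure, lintegral_sum_measure]
          rfl
  -- the main bound
  have hbound : ∀ n, mT (A n) ≤ ∑' k, mT (D (n + k)) := by
    intro n
    obtain ⟨E0, hE0, hp0, hm0c⟩ := (hql (A n) (hA n)).2.2.1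
    have hIEc : II Fp (A n) univ = II Fp (A n) E0ᶜ := by
      rw [II_split Fp (A n) hE0, II_null Fp (A n) hp0, zero_add]
    have hKE : II Fm (A n) univ = II Fm (A n) E0 := by
      rw [II_split Fm (A n) hE0, II_null Fm (A n) hm0c, add_zero]
    have hVpos : ∀ j : ℕ, (0 : ℝ) < 1 / ((j : ℝ) + 1) := fun j => by positivity
    have h1 : II Fm (A n) E0 ≤ ∑' k, II Fm (D (n + k)) E0 := by
      refine le_trans (II_le_iSup Fm (A n) hE0) (iSup_le fun j => ?_)
      have heq := hstar2 n (1 / ((j : ℝ) + 1)) (hVpos j)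
        (E0 ∩ {x : ℝ | 1 / ((j : ℝ) + 1) ≤ |x|})
        (hE0.inter (measurableSet_le measurable_const continuous_abs.measurable))
        (fun x hx => hx.2)
      have hIz : II Fp (A n) (E0 ∩ {x : ℝ | 1 / ((j : ℝ) + 1) ≤ |x|}) = 0 :=
        II_null Fp (A n) (measure_mono_null inter_subset_left hp0)
      calc II Fm (A n) (E0 ∩ {x : ℝ | 1 / ((j : ℝ) + 1) ≤ |x|})
          ≤ II Fm (A n) (E0 ∩ {x : ℝ | 1 / ((j : ℝ) + 1) ≤ |x|})
            + ∑' k, II Fp (D (n + k)) (E0 ∩ {x : ℝ | 1 / ((j : ℝ) + 1) ≤ |x|}) := le_self_add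
        _ = II Fp (A n) (E0 ∩ {x : ℝ | 1 / ((j : ℝ) + 1) ≤ |x|})
            + ∑' k, II Fm (D (n + k)) (E0 ∩ {x : ℝ | 1 / ((j : ℝ) + 1) ≤ |x|}) := heq.symm
        _ = ∑' k, II Fm (D (n + k)) (E0 ∩ {x : ℝ | 1 / ((j : ℝ) + 1) ≤ |x|}) := by
            rw [hIz, zero_add]
        _ ≤ ∑' k, II Fm (D (n + k)) E0 :=
            ENNReal.tsum_le_tsum fun k => II_mono Fm (D (n + k)) inter_subset_left
    have h2 : II Fp (A n) E0ᶜ ≤ ∑' k, II Fp (D (n + k)) E0ᶜ := by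
      refine le_trans (II_le_iSup Fp (A n) hE0.compl) (iSup_le fun j => ?_)
      have heq := hstar2 n (1 / ((j : ℝ) + 1)) (hVpos j)
        (E0ᶜ ∩ {x : ℝ | 1 / ((j : ℝ) + 1) ≤ |x|})
        (hE0.compl.inter (measurableSet_le measurable_const continuous_abs.measurable))
        (fun x hx => hx.2)
      have hKz : II Fm (A n) (E0ᶜ ∩ {x : ℝ | 1 / ((j : ℝ) + 1) ≤ |x|}) = 0 :=
        II_null Fm (A n) (measure_mono_null inter_subset_left hm0c)
      calc II Fp (A n) (E0ᶜ ∩ {x : ℝ | 1 / ((j : ℝ) + 1) ≤ |x|})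
          ≤ II Fp (A n) (E0ᶜ ∩ {x : ℝ | 1 / ((j : ℝ) + 1) ≤ |x|})
            + ∑' k, II Fm (D (n + k)) (E0ᶜ ∩ {x : ℝ | 1 / ((j : ℝ) + 1) ≤ |x|}) := le_self_add
        _ = II Fm (A n) (E0ᶜ ∩ {x : ℝ | 1 / ((j : ℝ) + 1) ≤ |x|})
            + ∑' k, II Fp (D (n + k)) (E0ᶜ ∩ {x : ℝ | 1 / ((j : ℝ) + 1) ≤ |x|}) := heq
        _ = ∑' k, II Fp (D (n + k)) (E0ᶜ ∩ {x : ℝ | 1 / ((j : ℝ) + 1) ≤ |x|}) := by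
            rw [hKz, zero_add]
        _ ≤ ∑' k, II Fp (D (n + k)) E0ᶜ :=
            ENNReal.tsum_le_tsum fun k => II_mono Fp (D (n + k)) inter_subset_left
    calc mT (A n) = II Fp (A n) E0ᶜ + II Fm (A n) E0 := by rw [hmT]; rw [← hIEc, ← hKE]
      _ ≤ (∑' k, II Fp (D (n + k)) E0ᶜ) + ∑' k, II Fm (D (n + k)) E0 := add_le_add h2 h1
      _ = ∑' k, (II Fp (D (n + k)) E0ᶜ + II Fm (D (n + k)) E0) := ENNReal.tsum_add.symm
      _ ≤ ∑' k, mT (D (n + k)) := ENNReal.tsum_le_tsum fun k =>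
          add_le_add (II_mono Fp (D (n + k)) (subset_univ _)) (II_mono Fm (D (n + k)) (subset_univ _))
  -- conclusion
  have htail : Tendsto (fun n => ∑' k, mT (D (n + k))) atTop (nhds 0) := by
    have h := ENNReal.tendsto_sum_nat_add (fun k => mT (D k)) htsum_ne
    exact h.congr fun n => tsum_congr fun k => by rw [Nat.add_comm]
  have hsq : Tendsto (fun n => mT (A n)) atTop (nhds 0) :=
    tendsto_of_tendsto_of_tendsto_of_le_of_le tendsto_const_nhds htail
      (fun n => zero_le) hbound
  refine hsq.congr fun n => ?_
  rw [hmT]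
  simp only [II_univ]
  rw [← lintegral_add_measure]
  rfl

end MainProof
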